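/- For real numbers c > 0 and y > 1, the Perron integral (1/(2πi)) ∫_{c-i∞}^{c+i∞} y^s ds/s equals 1. -/

import Mathlib

open Complex Filter

noncomputable section PerronAuxSection
open MeasureTheory Set intervalIntegral
open scoped Topology FourierTransform

lemma perron_norm_x_exp {z : ℂ} (x : ℝ) :
    ‖(x : ℂ) * Complex.exp (-(z * x))‖ = |x| * Real.exp (-(z.re * x)) := by
  rw [norm_mul]
  simp [Complex.norm_exp]

lemma perron_aux_integrableOn {z : ℂ} (hz : 0 < z.re) :
    IntegrableOn (fun x : ℝ => (x : ℂ) * Complex.exp (-(z * x))) (Ioi 0) := by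
  have hcont : ContinuousOn (fun x : ℝ => (x : ℂ) * Complex.exp (-(z * x))) (Ici 0) := by
    fun_prop
  refine Iff.mp integrableOn_Ici_iff_integrableOn_Ioi <|
    (hcont.locallyIntegrableOn measurableSet_Ici).integrableOn_of_isBigO_atTop
    ?_ ⟨Ioi 0, Ioi_mem_atTop 0, exp_neg_integrableOn_Ioi 0 (half_pos hz)⟩
  have h : Tendsto (fun x : ℝ => x ^ (1:ℝ) * Real.exp (-(z.re/2) * x)) atTop (𝓝 0) :=
    tendsto_rpow_mul_exp_neg_mul_atTop_nhds_zero 1 _ (half_pos hz)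
  rw [Asymptotics.isBigO_iff]
  refine ⟨1, ?_⟩
  have hev : ∀ᶠ x : ℝ in atTop, x ^ (1:ℝ) * Real.exp (-(z.re/2) * x) ≤ 1 := by
    filter_upwards [h.eventually_le_const one_pos] with x hx using hx
  filter_upwards [hev, eventually_ge_atTop (0:ℝ)] with x hx hx0
  rw [perron_norm_x_exp, _root_.abs_of_nonneg hx0]
  have : Real.exp (-(z.re * x)) = Real.exp (-(z.re/2) * x) * Real.exp (-(z.re/2) * x) := by
    rw [← Real.exp_add]; ring_nf
  rw [this, ← mul_assoc]
  have h1 : x * Real.exp (-(z.re/2) * x) ≤ 1 := by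
    simpa [Real.rpow_one] using hx
  calc x * Real.exp (-(z.re/2) * x) * Real.exp (-(z.re/2) * x)
      ≤ 1 * Real.exp (-(z.re/2) * x) := by
        exact mul_le_mul_of_nonneg_right h1 (Real.exp_nonneg _)
    _ = 1 * ‖Real.exp (-(z.re/2) * x)‖ := by rw [Real.norm_eq_abs, abs_of_pos (Real.exp_pos _)]

lemma perron_integral_x_exp {z : ℂ} (hz : 0 < z.re) :
    ∫ x : ℝ in Ioi 0, (x : ℂ) * Complex.exp (-(z * x)) = (z ^ 2)⁻¹ := by
  have hz0 : z ≠ 0 := fun h => by simp [h] at hz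
  set F : ℝ → ℂ := fun x => -((x / z) + (z^2)⁻¹) * Complex.exp (-(z * x)) with hF
  have hderiv : ∀ x : ℝ, HasDerivAt F ((x : ℂ) * Complex.exp (-(z * x))) x := by
    intro x
    have h1 : HasDerivAt (fun x : ℝ => -(((x:ℂ) / z) + (z^2)⁻¹)) (-(1/z)) x := by
      have := (Complex.ofRealCLM.hasDerivAt (x := x)).div_const z
      exact ((this.add_const ((z^2)⁻¹)).neg).congr_deriv (by simp)
    have h2 : HasDerivAt (fun x : ℝ => Complex.exp (-(z * x))) (-z * Complex.exp (-(z * x))) x := by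
      have hid : HasDerivAt (fun x : ℝ => -(z * (x:ℂ))) (-z) x := by
        exact (((Complex.ofRealCLM.hasDerivAt (x := x)).const_mul z).neg).congr_deriv (by simp)
      simpa [mul_comm] using hid.cexp
    have := h1.fun_mul h2
    refine this.congr_deriv ?_
    field_simp
    ring
  have htends : Tendsto F atTop (𝓝 0) := by

    have hb : Tendsto (fun x : ℝ => (‖z‖)⁻¹ * (x * Real.exp (-z.re * x))
        + ‖(z^2)⁻¹‖ * Real.exp (-z.re * x)) atTop (𝓝 ((‖z‖)⁻¹ * 0 + ‖(z^2)⁻¹‖ * 0)) := by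
      refine Tendsto.add (Tendsto.const_mul _ ?_) (Tendsto.const_mul _ ?_)
      · have := tendsto_rpow_mul_exp_neg_mul_atTop_nhds_zero 1 z.re hz
        refine this.congr' ?_
        filter_upwards [eventually_ge_atTop (0:ℝ)] with x hx
        rw [Real.rpow_one]
      · exact Real.tendsto_exp_atBot.comp (tendsto_id.const_mul_atTop_of_neg (by linarith))
    rw [mul_zero, mul_zero, add_zero] at hb
    refine squeeze_zero_norm' ?_ hb
    filter_upwards [eventually_ge_atTop (0:ℝ)] with x hx
    have hFx : ‖F x‖ = ‖(x:ℂ)/z + (z^2)⁻¹‖ * Real.exp (-z.re * x) := by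
      simp only [F]
      rw [norm_mul, norm_neg, Complex.norm_exp]
      congr 2
      simp
    rw [hFx]
    have hle : ‖(x:ℂ)/z + (z^2)⁻¹‖ ≤ (‖z‖)⁻¹ * x + ‖(z^2)⁻¹‖ := by
      refine (norm_add_le _ _).trans ?_
      rw [norm_div, Complex.norm_of_nonneg hx, div_eq_inv_mul]
    calc ‖(x:ℂ)/z + (z^2)⁻¹‖ * Real.exp (-z.re * x)
        ≤ ((‖z‖)⁻¹ * x + ‖(z^2)⁻¹‖) * Real.exp (-z.re * x) :=
          mul_le_mul_of_nonneg_right hle (Real.exp_nonneg _)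
      _ = (‖z‖)⁻¹ * (x * Real.exp (-z.re * x)) + ‖(z^2)⁻¹‖ * Real.exp (-z.re * x) := by ring
  have := integral_Ioi_of_hasDerivAt_of_tendsto (a := (0:ℝ))
    (f := F) (f' := fun x => (x : ℂ) * Complex.exp (-(z * x)))
    (hderiv 0).continuousAt.continuousWithinAt (fun x _ => hderiv x)
    (perron_aux_integrableOn hz) htends
  rw [this]
  simp [F]

variable {c : ℝ}

/-- The test function for Fourier inversion. -/
def perronF (c : ℝ) : ℝ → ℂ := fun x => ((max x 0 : ℝ) : ℂ) * Complex.exp (-((c:ℂ) * x))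

lemma perronF_cont : Continuous (perronF c) := by
  unfold perronF
  fun_prop

lemma perronF_integrable (hc : 0 < c) : Integrable (perronF c) := by
  have h1 : IntegrableOn (perronF c) (Iic 0) := by
    refine (integrableOn_congr_fun (g := fun _ => (0:ℂ)) ?_ measurableSet_Iic).mpr
      (integrableOn_zero)
    intro x hx
    simp [perronF, max_eq_right (mem_Iic.mp hx)]
  have h2 : IntegrableOn (perronF c) (Ioi 0) := by
    refine (integrableOn_congr_fun (g := fun x : ℝ => (x:ℂ) * Complex.exp (-((c:ℂ) * x))) ?_
      measurableSet_Ioi).mpr (perron_aux_integrableOn (by simpa using hc))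
    intro x hx
    simp [perronF, max_eq_left (le_of_lt (mem_Ioi.mp hx))]
  have := h1.union h2
  rwa [Iic_union_Ioi, integrableOn_univ] at this

open Real in
lemma perronF_fourier (hc : 0 < c) (ξ : ℝ) :
    (𝓕 (perronF c)) ξ = (((c:ℂ) + 2*π*ξ*Complex.I)^2)⁻¹ := by
  rw [Real.fourier_real_eq_integral_exp_smul]
  have hvanish : ∀ x : ℝ, x ∉ Ioi (0:ℝ) →
      Complex.exp (↑(-2 * π * x * ξ) * Complex.I) • perronF c x = 0 := by
    intro x hx
    simp only [mem_Ioi, not_lt] at hx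
    simp [perronF, max_eq_right hx]
  rw [← MeasureTheory.setIntegral_eq_integral_of_forall_compl_eq_zero hvanish]
  have heq : ∀ x ∈ Ioi (0:ℝ), Complex.exp (↑(-2 * π * x * ξ) * Complex.I) • perronF c x
      = (x:ℂ) * Complex.exp (-(((c:ℂ) + 2*π*ξ*Complex.I) * x)) := by
    intro x hx
    have hx' : (0:ℝ) ≤ x := le_of_lt (mem_Ioi.mp hx)
    simp only [perronF, max_eq_left hx', smul_eq_mul]
    rw [mul_left_comm, ← Complex.exp_add]
    congr 2
    push_cast
    ring
  rw [MeasureTheory.setIntegral_congr_fun measurableSet_Ioi heq]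
  exact perron_integral_x_exp (by simpa using hc)

open Real in
lemma perron_ne (hc : 0 < c) (t : ℝ) : ((c:ℂ) + t * Complex.I) ≠ 0 := by
  intro h
  have := congrArg Complex.re h
  simp at this
  exact hc.ne' this

open Real in
lemma perronF_fourier_integrable (hc : 0 < c) : Integrable (𝓕 (perronF c)) := by
  have hne : ∀ ξ : ℝ, ((c:ℂ) + 2*π*ξ*Complex.I) ≠ 0 := by
    intro ξ h
    have := congrArg Complex.re h
    simp at this
    exact hc.ne' this
  have hcont : Continuous fun ξ : ℝ => (((c:ℂ) + 2*π*ξ*Complex.I)^2)⁻¹ := by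
    apply Continuous.inv₀
    · fun_prop
    · exact fun ξ => pow_ne_zero _ (hne ξ)
  have hint : Integrable fun ξ : ℝ => (((c:ℂ) + 2*π*ξ*Complex.I)^2)⁻¹ := by
    set m : ℝ := min (c^2) ((2*π)^2) with hm
    have hmpos : 0 < m := lt_min (by positivity) (by positivity)
    refine Integrable.mono' ((integrable_inv_one_add_sq).const_mul m⁻¹)
      hcont.aestronglyMeasurable ?_
    filter_upwards with ξ
    have habs : ‖(((c:ℂ) + 2*π*ξ*Complex.I)^2)‖ = c^2 + (2*π*ξ)^2 := by
      rw [norm_pow, ← Complex.normSq_eq_norm_sq, Complex.normSq_apply]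
      simp
      ring
    rw [norm_inv, habs]
    have h1 : m * (1 + ξ^2) ≤ c^2 + (2*π*ξ)^2 := by
      have := min_le_left (c^2) ((2*π)^2)
      have := min_le_right (c^2) ((2*π)^2)
      have h2 : m * ξ^2 ≤ (2*π)^2 * ξ^2 := by nlinarith [sq_nonneg ξ]
      nlinarith [sq_nonneg ξ]
    rw [inv_le_iff_one_le_mul₀ (by positivity)]
    calc (1:ℝ) = m⁻¹ * (1 + ξ^2)⁻¹ * (m * (1 + ξ^2)) := by
          field_simp
      _ ≤ m⁻¹ * (1 + ξ^2)⁻¹ * (c^2 + (2*π*ξ)^2) := by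
          gcongr
  exact hint.congr (Filter.Eventually.of_forall fun ξ => (perronF_fourier hc ξ).symm)

open Real in
lemma perron_integrable_inv_sq (hc : 0 < c) :
    Integrable (fun t : ℝ => (((c:ℂ) + t*Complex.I)^2)⁻¹) := by
  have hcont : Continuous fun t : ℝ => (((c:ℂ) + t*Complex.I)^2)⁻¹ := by
    apply Continuous.inv₀
    · fun_prop
    · exact fun t => pow_ne_zero _ (perron_ne hc t)
  set m : ℝ := min (c^2) 1 with hm
  have hmpos : 0 < m := lt_min (by positivity) one_pos
  refine Integrable.mono' ((integrable_inv_one_add_sq).const_mul m⁻¹)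
    hcont.aestronglyMeasurable ?_
  filter_upwards with t
  have habs : ‖(((c:ℂ) + t*Complex.I)^2)‖ = c^2 + t^2 := by
    rw [norm_pow, ← Complex.normSq_eq_norm_sq, Complex.normSq_apply]
    simp
    ring
  rw [norm_inv, habs]
  have h1 : m * (1 + t^2) ≤ c^2 + t^2 := by
    have h2 := min_le_left (c^2) 1
    have h3 := min_le_right (c^2) 1
    nlinarith [sq_nonneg t]
  rw [inv_le_iff_one_le_mul₀ (by positivity)]
  calc (1:ℝ) = m⁻¹ * (1 + t^2)⁻¹ * (m * (1 + t^2)) := by field_simp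
    _ ≤ m⁻¹ * (1 + t^2)⁻¹ * (c^2 + t^2) := by gcongr

open Real in
lemma perron_integrable_exp_inv_sq (hc : 0 < c) (a : ℝ) :
    Integrable (fun t : ℝ => Complex.exp (↑(a*t) * Complex.I) * (((c:ℂ) + t*Complex.I)^2)⁻¹) := by
  refine (perron_integrable_inv_sq hc).bdd_mul (c := 1) ?_ (Filter.Eventually.of_forall fun t => ?_)
  · exact (Complex.continuous_exp.comp (by fun_prop)).aestronglyMeasurable
  · rw [Complex.norm_exp]
    simp

open Real in
lemma perron_key (hc : 0 < c) {a : ℝ} (ha : 0 < a) :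
    ∫ t : ℝ, Complex.exp (↑(a*t) * Complex.I) * (((c:ℂ) + t*Complex.I)^2)⁻¹
      = 2*π*a*Real.exp (-(c*a)) := by
  have hinv := (perronF_cont (c := c)).fourierInv_fourier_eq (perronF_integrable hc)
    (perronF_fourier_integrable hc)
  have hval := congrFun hinv a
  rw [Real.fourierInv_eq_fourier_neg,
    Real.fourier_real_eq_integral_exp_smul] at hval
  have heq : ∀ ξ : ℝ, Complex.exp (↑(-2 * π * ξ * (-a)) * Complex.I) • (𝓕 (perronF c)) ξ
      = (fun t : ℝ => Complex.exp (↑(a*t) * Complex.I) * (((c:ℂ) + t*Complex.I)^2)⁻¹) (2*π*ξ) := by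
    intro ξ
    have e1 : (↑(-2*π*ξ*(-a)) : ℂ) * Complex.I = ↑(a*(2*π*ξ)) * Complex.I := by push_cast; ring
    have e2 : ((2*π*ξ : ℝ) : ℂ) = 2*(π:ℝ)*(ξ:ℝ) := by push_cast; ring
    show _ = Complex.exp (↑(a*(2*π*ξ)) * Complex.I) * (((c:ℂ) + ↑(2*π*ξ)*Complex.I)^2)⁻¹
    rw [smul_eq_mul, perronF_fourier hc ξ, e1, e2]
  rw [integral_congr_ae (Filter.Eventually.of_forall heq),
    MeasureTheory.Measure.integral_comp_mul_left
      (fun t : ℝ => Complex.exp (↑(a*t) * Complex.I) * (((c:ℂ) + t*Complex.I)^2)⁻¹) (2*π)] at hval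
  have hfa : perronF c a = (a : ℂ) * Real.exp (-(c*a)) := by
    simp only [perronF, max_eq_left ha.le]
    rw [show -((c:ℂ)*(a:ℂ)) = ((-(c*a) : ℝ) : ℂ) by push_cast; ring, ← Complex.ofReal_exp]
  rw [abs_of_pos (by positivity : (0:ℝ) < (2*π)⁻¹), hfa] at hval
  have hJ : (∫ t : ℝ, Complex.exp (↑(a*t) * Complex.I) * (((c:ℂ) + t*Complex.I)^2)⁻¹)
      = ((2*π : ℝ)) • ((a : ℂ) * Real.exp (-(c*a))) := by
    rw [← hval, smul_smul, mul_inv_cancel₀ (by positivity : (2*π:ℝ) ≠ 0), one_smul]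
  rw [hJ, Complex.real_smul]
  push_cast
  ring

set_option maxHeartbeats 1000000 in
open Real in
theorem perron_formula_of_one_lt' (c y : ℝ) (hc : 0 < c) (hy : 1 < y) :
    Tendsto (fun T : ℝ =>
      (1 / (2 * Real.pi * Complex.I)) *
        ∫ t in (-T)..T, (y : ℂ) ^ ((c : ℂ) + t * Complex.I) / ((c : ℂ) + t * Complex.I) * Complex.I)
      atTop (𝓝 1) := by
  have hy0 : (0:ℝ) < y := lt_trans zero_lt_one hy
  set a : ℝ := Real.log y with ha_def
  have ha : 0 < a := Real.log_pos hy
  have ha0 : (a:ℂ) ≠ 0 := Complex.ofReal_ne_zero.mpr ha.ne'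
  have hcpow : ∀ s : ℂ, (y:ℂ)^s = Complex.exp (↑a * s) := by
    intro s
    rw [Complex.cpow_def_of_ne_zero (Complex.ofReal_ne_zero.mpr hy0.ne'), ← Complex.ofReal_log hy0.le]
  set u : ℝ → ℂ := fun t => ((c:ℂ) + t*Complex.I)⁻¹ with hu_def
  set v : ℝ → ℂ := fun t => Complex.exp (↑a * ((c:ℂ) + t*Complex.I)) with hv_def
  have hu : ∀ x : ℝ, HasDerivAt u (-Complex.I / ((c:ℂ) + x*Complex.I)^2) x := by
    intro x
    have hbase : HasDerivAt (fun t : ℝ => (c:ℂ) + t*Complex.I) Complex.I x := by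
      simpa using ((Complex.ofRealCLM.hasDerivAt (x := x)).mul_const Complex.I).const_add (c:ℂ)
    have h := (hasDerivAt_const x (1:ℂ)).fun_div hbase (perron_ne hc x)
    simpa [one_div] using h
  have hv : ∀ x : ℝ, HasDerivAt v (Complex.exp (↑a * ((c:ℂ) + x*Complex.I)) * (↑a * Complex.I)) x := by
    intro x
    have hbase : HasDerivAt (fun t : ℝ => (c:ℂ) + t*Complex.I) Complex.I x := by
      simpa using ((Complex.ofRealCLM.hasDerivAt (x := x)).mul_const Complex.I).const_add (c:ℂ)
    exact (hbase.const_mul (a:ℂ)).cexp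
  have hucont : Continuous u := by
    apply Continuous.inv₀
    · fun_prop
    · exact perron_ne hc
  have hvcont : Continuous v := Complex.continuous_exp.comp (by fun_prop)
  have hu'cont : Continuous fun x : ℝ => -Complex.I / ((c:ℂ) + x*Complex.I)^2 := by
    apply Continuous.div continuous_const
    · fun_prop
    · exact fun x => pow_ne_zero _ (perron_ne hc x)
  have hibp : ∀ T : ℝ, (∫ t in (-T)..T,
        Complex.exp (↑a * ((c:ℂ) + t*Complex.I)) / ((c:ℂ) + t*Complex.I) * Complex.I)
      = (↑a)⁻¹ * (u T * v T - u (-T) * v (-T))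
        + (↑a)⁻¹ * Complex.I * (Complex.exp (↑(a*c)) *
          ∫ t in (-T)..T, Complex.exp (↑(a*t) * Complex.I) * (((c:ℂ) + t*Complex.I)^2)⁻¹) := by
    intro T
    have hv'cont : Continuous fun x : ℝ => Complex.exp (↑a * ((c:ℂ) + x*Complex.I)) * (↑a * Complex.I) :=
      hvcont.mul continuous_const
    have key : (∫ t in (-T)..T, u t * (Complex.exp (↑a * ((c:ℂ) + t*Complex.I)) * (↑a * Complex.I)))
        = u T * v T - u (-T) * v (-T)
          - ∫ t in (-T)..T, (-Complex.I / ((c:ℂ) + t*Complex.I)^2) * v t :=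
      intervalIntegral.integral_mul_deriv_eq_deriv_mul
        (fun x _ => hu x) (fun x _ => hv x)
        (hu'cont.intervalIntegrable _ _)
        (hv'cont.intervalIntegrable _ _)
    have lhs_eq : (∫ t in (-T)..T,
          Complex.exp (↑a * ((c:ℂ) + t*Complex.I)) / ((c:ℂ) + t*Complex.I) * Complex.I)
        = (↑a)⁻¹ * ∫ t in (-T)..T, u t * (Complex.exp (↑a * ((c:ℂ) + t*Complex.I)) * (↑a * Complex.I)) := by
      rw [← intervalIntegral.integral_const_mul]
      apply intervalIntegral.integral_congr
      intro t _
      simp only [u]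
      field_simp [perron_ne hc t, ha0]
    rw [lhs_eq, key]
    have rhs_eq : (∫ t in (-T)..T, (-Complex.I / ((c:ℂ) + t*Complex.I)^2) * v t)
        = -Complex.I * (Complex.exp (↑(a*c)) *
            ∫ t in (-T)..T, Complex.exp (↑(a*t) * Complex.I) * (((c:ℂ) + t*Complex.I)^2)⁻¹) := by
      rw [← intervalIntegral.integral_const_mul, ← intervalIntegral.integral_const_mul]
      apply intervalIntegral.integral_congr
      intro t _
      simp only [v]
      rw [show (↑a * ((c:ℂ) + t*Complex.I)) = ↑(a*c) + ↑(a*t)*Complex.I by push_cast; ring,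
        Complex.exp_add]
      field_simp
    rw [rhs_eq]
    ring
  have T1 : Tendsto (fun T : ℝ => u T * v T - u (-T) * v (-T)) atTop (𝓝 0) := by
    have hb : Tendsto (fun T : ℝ => 2 * Real.exp (a*c) * T⁻¹) atTop (𝓝 (2 * Real.exp (a*c) * 0)) :=
      tendsto_inv_atTop_zero.const_mul _
    rw [mul_zero] at hb
    refine squeeze_zero_norm' ?_ hb
    filter_upwards [eventually_gt_atTop (0:ℝ)] with T hT
    have hnorm : ∀ s : ℝ, |s| = T → ‖u s * v s‖ ≤ Real.exp (a*c) * T⁻¹ := by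
      intro s hs
      rw [norm_mul]
      have h1 : ‖u s‖ ≤ T⁻¹ := by
        simp only [u, norm_inv]
        rw [inv_le_inv₀ (by
          refine lt_of_lt_of_le hT ?_
          rw [← hs]
          have := Complex.abs_im_le_norm ((c:ℂ) + s*Complex.I)
          simpa using this) hT]
        refine le_trans ?_ (Complex.abs_im_le_norm ((c:ℂ) + s*Complex.I))
        simp [hs]
      have h2 : ‖v s‖ = Real.exp (a*c) := by
        simp only [v]
        rw [Complex.norm_exp]
        congr 1
        simp
      rw [h2]
      calc ‖u s‖ * Real.exp (a*c) ≤ T⁻¹ * Real.exp (a*c) :=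
            mul_le_mul_of_nonneg_right h1 (Real.exp_nonneg _)
        _ = Real.exp (a*c) * T⁻¹ := by ring
    calc ‖u T * v T - u (-T) * v (-T)‖ ≤ ‖u T * v T‖ + ‖u (-T) * v (-T)‖ := norm_sub_le _ _
      _ ≤ Real.exp (a*c) * T⁻¹ + Real.exp (a*c) * T⁻¹ := by
          gcongr
          · exact hnorm T (abs_of_pos hT)
          · exact hnorm (-T) (by rw [abs_neg, abs_of_pos hT])
      _ = 2 * Real.exp (a*c) * T⁻¹ := by ring
  have T2 : Tendsto (fun T : ℝ => ∫ t in (-T)..T,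
        Complex.exp (↑(a*t) * Complex.I) * (((c:ℂ) + t*Complex.I)^2)⁻¹) atTop
      (𝓝 (2*π*a*Real.exp (-(c*a)))) := by
    rw [← perron_key hc ha]
    exact MeasureTheory.intervalIntegral_tendsto_integral (perron_integrable_exp_inv_sq hc a)
      tendsto_neg_atTop_atBot tendsto_id
  have Tmain : Tendsto (fun T : ℝ => ∫ t in (-T)..T,
        Complex.exp (↑a * ((c:ℂ) + t*Complex.I)) / ((c:ℂ) + t*Complex.I) * Complex.I) atTop
      (𝓝 (2*π*Complex.I)) := by
    have combined := ((T1.const_mul ((a:ℂ)⁻¹)).add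
      ((T2.const_mul (Complex.exp (↑(a*c)))).const_mul ((↑a)⁻¹ * Complex.I)))
    have hexp : Complex.exp (↑(a*c)) * (↑(Real.exp (-(c*a))) : ℂ) = 1 := by
      rw [← Complex.ofReal_exp, ← Complex.ofReal_mul, ← Real.exp_add]
      norm_num [mul_comm]
    have hval : (↑a)⁻¹ * 0 + (↑a)⁻¹ * Complex.I * (Complex.exp (↑(a*c)) * (2*↑π*↑a*↑(Real.exp (-(c*a)))))
        = 2*↑π*Complex.I := by
      rw [mul_zero, zero_add,
        show Complex.exp (↑(a*c)) * (2*(π:ℂ)*↑a*↑(Real.exp (-(c*a))))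
          = (Complex.exp (↑(a*c)) * ↑(Real.exp (-(c*a)))) * (2*(π:ℂ)*↑a) by ring, hexp, one_mul]
      field_simp
    rw [hval] at combined
    refine combined.congr fun T => (hibp T).symm
  have hconst : (1 / (2 * (π:ℂ) * Complex.I)) * (2*π*Complex.I) = 1 := by
    field_simp [Real.pi_ne_zero, Complex.I_ne_zero]
  have final := Tmain.const_mul (1 / (2 * (π:ℂ) * Complex.I))
  rw [hconst] at final
  refine final.congr fun T => ?_
  simp only [hcpow]

end PerronAuxSection

/-- For real `c > 0` and `y > 1`, the Perron integral
`(1/(2πi)) ∫_{c-i∞}^{c+i∞} y^s ds/s`, interpreted as the symmetric limit of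
integrals from `c - iT` to `c + iT`, equals `1`. -/
theorem perron_formula_of_one_lt (c y : ℝ) (hc : 0 < c) (hy : 1 < y) :
    Tendsto (fun T : ℝ =>
      (1 / (2 * Real.pi * I)) *
        ∫ t in (-T)..T, (y : ℂ) ^ ((c : ℂ) + t * I) / ((c : ℂ) + t * I) * I)
      atTop (nhds 1) := by
  exact perron_formula_of_one_lt' c y hc hy
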